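/- The A^e-linear map Δ: 𝔸 → 𝔸⊗_A𝔸 defined by Δ₀(ξ₀) = ξ₀⊗_Aξ₀, Δ₁(ξ₁) = ξ₁⊗_Aξ₀ + ξ₀⊗_Aξ₁, Δ_{2n}(ξ_{2n}) = Σ_{i=0}^{n} ξ_{2i}⊗_Aξ_{2n−2i} + Σ_{i=0}^{n−1} Σ_{a+b+c=p−2} x^a ξ_{2i+1} ⊗_A x^b ξ_{2n−2i−1} x^c for n ≥ 1, and Δ_{2n+1}(ξ_{2n+1}) = Σ_{i=0}^{2n+1} ξ_i ⊗_A ξ_{2n+1−i} for n ≥ 1, is a chain map lifting the canonical isomorphism A → A⊗_A A; that is, d_{𝔸⊗_A𝔸} ∘ Δ_n = Δ_{n−1} ∘ d_n for all n ≥ 1, and (π⊗_Aπ)∘Δ₀ equals the canonical isomorphism A ≅ A⊗_A A composed with π. -/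
import Mathlib


/-!
Setting: `k` a field of characteristic 0, `p > 2` an integer, `A = k[x]/(x^p)`,
`A^e = A ⊗ₖ A` (as `A` is commutative `A^op = A`), `u = x⊗1 - 1⊗x`,
`v = Σ_{i=0}^{p-1} x^i ⊗ x^{p-1-i}`, and `π : A^e → A` the multiplication map.
The complex `𝔸` has `𝔸ₙ = A^e` for `n ≥ 0`, with differential given by multiplication
by `u` in odd degrees and by `v` in even degrees, and augmentation `π`.
We write `ξₙ = 1 ⊗ 1` for the generator of `𝔸ₙ`, so that `x^i ξₙ x^j = x^i ⊗ x^j`.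
-/

open TensorProduct Polynomial

noncomputable section
set_option linter.unusedSectionVars false
set_option synthInstance.maxHeartbeats 2000000
set_option maxHeartbeats 1000000

variable (k : Type) [Field k] [CharZero k] (p : ℕ)

/-- `A = k[x]/(x^p)`. -/
abbrev Aq : Type := AdjoinRoot (X ^ p : k[X])

/-- `A^e = A ⊗ₖ A`. -/
abbrev Ae : Type := Aq k p ⊗[k] Aq k p

/-- The class of `x` in `A = k[x]/(x^p)`. -/
def xq : Aq k p := AdjoinRoot.root _

/-- `u = x ⊗ 1 - 1 ⊗ x ∈ A^e`. -/
def uE : Ae k p := xq k p ⊗ₜ 1 - 1 ⊗ₜ xq k p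

/-- `v = Σ_{i=0}^{p-1} x^i ⊗ x^{p-1-i} ∈ A^e`. -/
def vE : Ae k p := ∑ i ∈ Finset.range p, (xq k p ^ i) ⊗ₜ (xq k p ^ (p - 1 - i))

/-- The differential `dₙ : 𝔸ₙ → 𝔸ₙ₋₁` of the complex `𝔸`: multiplication by `u`
for `n` odd and by `v` for `n` even (`n ≥ 1`). -/
def dAn (n : ℕ) : Ae k p →ₗ[k] Ae k p :=
  LinearMap.mulLeft k (if n % 2 = 1 then uE k p else vE k p)

/-- The multiplication (augmentation) map `π : A^e → A`. -/
def piA : Ae k p →ₗ[k] Aq k p := LinearMap.mul' k (Aq k p)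

/-!
The tensor square complex `𝔸 ⊗_A 𝔸`:  since `𝔸ᵢ ⊗_A 𝔸ⱼ ≅ A ⊗ₖ A ⊗ₖ A` (via
`(a ⊗ b) ⊗_A (c ⊗ e) ↦ a ⊗ (b*c) ⊗ e`), we model the degree-`n` term
`(𝔸 ⊗_A 𝔸)ₙ = ⊕_{i+j=n} 𝔸ᵢ ⊗_A 𝔸ⱼ` as `Fin (n+1) → (A ⊗ₖ A) ⊗ₖ A`, the
component `i` corresponding to the summand `𝔸ᵢ ⊗_A 𝔸_{n-i}`.  Under this model
the left and right differentials become multiplication by the elements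
`uL, vL, uR, vR` below, and the total differential `d(a ⊗_A b) = da ⊗_A b +
(-1)^{|a|} a ⊗_A db` is `dTot`.  The chain map `F = μ ⊗_A id - id ⊗_A μ`
(where `μ` is `π` in degree 0 and `0` in positive degrees) becomes `FF`.
-/

/-- Model for `𝔸ᵢ ⊗_A 𝔸ⱼ`:  `(a⊗b) ⊗_A (c⊗e) ↦ (a ⊗ b*c) ⊗ e`. -/
abbrev TT : Type := Ae k p ⊗[k] Aq k p

/-- `u` acting through the left tensor factor: `x⊗1⊗1 - 1⊗x⊗1`. -/
def uL : TT k p := (uE k p) ⊗ₜ 1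
/-- `v` acting through the left tensor factor. -/
def vL : TT k p := (vE k p) ⊗ₜ 1
/-- `u` acting through the right tensor factor: `1⊗x⊗1 - 1⊗1⊗x`. -/
def uR : TT k p := ((1 : Aq k p) ⊗ₜ xq k p) ⊗ₜ 1 - ((1 : Aq k p) ⊗ₜ (1 : Aq k p)) ⊗ₜ xq k p
/-- `v` acting through the right tensor factor. -/
def vR : TT k p :=
  ∑ i ∈ Finset.range p, ((1 : Aq k p) ⊗ₜ (xq k p ^ i)) ⊗ₜ (xq k p ^ (p - 1 - i))

/-- Differential on the left tensor factor in degree `m`. -/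
def eL (m : ℕ) : TT k p := if m % 2 = 1 then uL k p else vL k p
/-- Differential on the right tensor factor in degree `m`. -/
def eR (m : ℕ) : TT k p := if m % 2 = 1 then uR k p else vR k p

/-- The total differential of the complex `𝔸 ⊗_A 𝔸`. -/
def dTot (n : ℕ) : (Fin (n + 1) → TT k p) →ₗ[k] (Fin n → TT k p) :=
  LinearMap.pi fun i => LinearMap.mulLeft k (eL k p (i + 1)) ∘ₗ LinearMap.proj i.succ
    + ((-1 : k) ^ (i : ℕ)) • (LinearMap.mulLeft k (eR k p (n - i)) ∘ₗ LinearMap.proj i.castSucc)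

/-- `μ ⊗_A id` on the component `𝔸₀ ⊗_A 𝔸ₙ`:  `a ⊗ m ⊗ e ↦ (a*m) ⊗ e`. -/
def Lmap : TT k p →ₗ[k] Ae k p := (LinearMap.mul' k (Aq k p)).rTensor (Aq k p)

/-- `id ⊗_A μ` on the component `𝔸ₙ ⊗_A 𝔸₀`:  `a ⊗ m ⊗ e ↦ a ⊗ (m*e)`. -/
def Rmap : TT k p →ₗ[k] Ae k p :=
  (LinearMap.mul' k (Aq k p)).lTensor (Aq k p) ∘ₗ
    (TensorProduct.assoc k (Aq k p) (Aq k p) (Aq k p)).toLinearMap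

/-- The chain map `F = μ ⊗_A id - id ⊗_A μ : (𝔸 ⊗_A 𝔸)ₙ → 𝔸ₙ`. -/
def FF (n : ℕ) : (Fin (n + 1) → TT k p) →ₗ[k] Ae k p :=
  Lmap k p ∘ₗ LinearMap.proj 0 - Rmap k p ∘ₗ LinearMap.proj (Fin.last n)

/-- The element `Σ_{a+b+c=p-2} x^a ξ ⊗_A x^b ξ x^c` appearing in the diagonal map. -/
def wElt : TT k p :=
  ∑ a ∈ Finset.range (p - 1), ∑ b ∈ Finset.range (p - 1 - a),
    ((xq k p ^ a) ⊗ₜ (xq k p ^ b)) ⊗ₜ (xq k p ^ (p - 2 - a - b))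

/-- Component `i` of `Δₙ(ξₙ)`: it is `ξᵢ ⊗_A ξ_{n-i} = 1⊗1⊗1` except when `n` is even
and `i` is odd, where it is `Σ_{a+b+c=p-2} x^a ξᵢ ⊗_A x^b ξ_{n-i} x^c`. -/
def dElt (n i : ℕ) : TT k p := if n % 2 = 0 ∧ i % 2 = 1 then wElt k p else 1

/-- `π ⊗_A π : 𝔸₀ ⊗_A 𝔸₀ → A ⊗_A A ≅ A`: multiply all three tensor factors. -/
def mulAll : (Fin 1 → TT k p) →ₗ[k] Aq k p :=
  LinearMap.mul' k (Aq k p) ∘ₗ Lmap k p ∘ₗ LinearMap.proj 0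


/- ### Auxiliary development -/

set_option synthInstance.maxHeartbeats 2000000 in
instance ttCommRing : CommRing (TT k p) := inferInstance
set_option synthInstance.maxHeartbeats 2000000 in
instance ttAlgebra : Algebra k (TT k p) := inferInstance

-- auxiliary
def X1 : TT k p := (xq k p ⊗ₜ 1) ⊗ₜ 1
def X2 : TT k p := ((1 : Aq k p) ⊗ₜ xq k p) ⊗ₜ 1
def X3 : TT k p := ((1 : Aq k p) ⊗ₜ (1 : Aq k p)) ⊗ₜ xq k p
def uM : TT k p := X1 k p - X3 k p
def vM : TT k p := ∑ i ∈ Finset.range p, X1 k p ^ i * X3 k p ^ (p - 1 - i)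

lemma trip (a b c : ℕ) :
    (((xq k p ^ a) ⊗ₜ (xq k p ^ b)) ⊗ₜ (xq k p ^ c) : TT k p)
      = X1 k p ^ a * X2 k p ^ b * X3 k p ^ c := by
  simp [X1, X2, X3, Algebra.TensorProduct.tmul_pow, Algebra.TensorProduct.tmul_mul_tmul]

lemma uL_eq : uL k p = X1 k p - X2 k p := by
  simp [uL, uE, X1, X2, TensorProduct.sub_tmul]

lemma uR_eq : uR k p = X2 k p - X3 k p := rfl

lemma vL_eq : vL k p = ∑ i ∈ Finset.range p, X1 k p ^ i * X2 k p ^ (p - 1 - i) := by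
  rw [vL, vE, TensorProduct.sum_tmul]
  refine Finset.sum_congr rfl fun i _ => ?_
  have := trip k p i (p - 1 - i) 0
  rw [pow_zero, pow_zero, mul_one] at this
  exact this

lemma vR_eq : vR k p = ∑ i ∈ Finset.range p, X2 k p ^ i * X3 k p ^ (p - 1 - i) := by
  rw [vR]
  refine Finset.sum_congr rfl fun i _ => ?_
  have := trip k p 0 i (p - 1 - i)
  rw [pow_zero, pow_zero, one_mul] at this
  exact this

lemma w_eq : wElt k p = ∑ a ∈ Finset.range (p - 1), ∑ b ∈ Finset.range (p - 1 - a),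
    X1 k p ^ a * X2 k p ^ b * X3 k p ^ (p - 2 - a - b) := by
  rw [wElt]
  exact Finset.sum_congr rfl fun a _ => Finset.sum_congr rfl fun b _ => trip k p _ _ _

lemma tri_swap {M : Type} [AddCommMonoid M] (f : ℕ → ℕ → M) (n : ℕ) :
    ∑ a ∈ Finset.range n, ∑ c ∈ Finset.range (n - a), f a c
      = ∑ c ∈ Finset.range n, ∑ a ∈ Finset.range (n - c), f a c := by
  rw [Finset.sum_sigma', Finset.sum_sigma']
  apply Finset.sum_nbij' (fun x => ⟨x.2, x.1⟩) (fun x => ⟨x.2, x.1⟩) <;>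
    simp only [Finset.mem_sigma, Finset.mem_range] <;> intros <;> first | omega | rfl | trivial

lemma idC : uL k p + uR k p = uM k p := by
  rw [uL_eq, uR_eq, uM]; ring

lemma idB (hp : 2 < p) : uR k p * wElt k p = vL k p - vM k p := by
  rw [uR_eq, w_eq, vL_eq, vM, Finset.mul_sum]
  have hsplit : ∀ Y : TT k p, ∑ i ∈ Finset.range p, X1 k p ^ i * Y ^ (p - 1 - i)
      = (∑ i ∈ Finset.range (p-1), X1 k p ^ i * Y ^ (p - 1 - i)) + X1 k p ^ (p-1) * Y ^ 0 := by
    intro Y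
    have h1 : p - 1 + 1 = p := by omega
    have h2 := Finset.sum_range_succ (fun i => X1 k p ^ i * Y ^ (p - 1 - i)) (p - 1)
    rw [h1, Nat.sub_self] at h2
    exact h2
  rw [hsplit (X2 k p), hsplit (X3 k p)]
  have key : ∀ a ∈ Finset.range (p - 1),
      (X2 k p - X3 k p) * ∑ b ∈ Finset.range (p - 1 - a),
          X1 k p ^ a * X2 k p ^ b * X3 k p ^ (p - 2 - a - b)
        = X1 k p ^ a * X2 k p ^ (p - 1 - a) - X1 k p ^ a * X3 k p ^ (p - 1 - a) := by
    intro a ha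
    rw [Finset.mem_range] at ha
    rw [Finset.mul_sum]
    have step : ∀ b ∈ Finset.range (p - 1 - a),
        (X2 k p - X3 k p) * (X1 k p ^ a * X2 k p ^ b * X3 k p ^ (p - 2 - a - b))
          = X1 k p ^ a * X2 k p ^ (b+1) * X3 k p ^ (p - 1 - a - (b+1))
            - X1 k p ^ a * X2 k p ^ b * X3 k p ^ (p - 1 - a - b) := by
      intro b hb
      rw [Finset.mem_range] at hb
      have e1 : p - 1 - a - (b+1) = p - 2 - a - b := by omega
      have e2 : p - 1 - a - b = (p - 2 - a - b) + 1 := by omega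
      rw [e1, e2]; ring
    rw [Finset.sum_congr rfl step,
      Finset.sum_range_sub (fun b => X1 k p ^ a * X2 k p ^ b * X3 k p ^ (p - 1 - a - b))]
    have e3 : p - 1 - a - (p - 1 - a) = 0 := by omega
    rw [e3, Nat.sub_zero]
    ring
  rw [Finset.sum_congr rfl key, Finset.sum_sub_distrib]
  simp only [pow_zero, mul_one]
  abel

lemma w_eq' (hp : 2 < p) : wElt k p = ∑ c ∈ Finset.range (p - 1), ∑ a ∈ Finset.range (p - 1 - c),
    X1 k p ^ a * X2 k p ^ (p - 2 - a - c) * X3 k p ^ c := by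
  rw [w_eq]
  rw [tri_swap (fun c a => X1 k p ^ a * X2 k p ^ (p - 2 - a - c) * X3 k p ^ c) (p-1)]
  refine Finset.sum_congr rfl fun a ha => ?_
  rw [Finset.mem_range] at ha
  rw [← Finset.sum_range_reflect (fun c => X1 k p ^ a * X2 k p ^ (p - 2 - a - c) * X3 k p ^ c) (p - 1 - a)]
  refine Finset.sum_congr rfl fun b hb => ?_
  rw [Finset.mem_range] at hb
  have e1 : p - 2 - a - (p - 1 - a - 1 - b) = b := by omega
  have e2 : p - 1 - a - 1 - b = p - 2 - a - b := by omega
  rw [e1, e2]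

lemma vM_refl : vM k p = ∑ j ∈ Finset.range p, X1 k p ^ (p - 1 - j) * X3 k p ^ j := by
  rw [vM, ← Finset.sum_range_reflect (fun j => X1 k p ^ (p - 1 - j) * X3 k p ^ j) p]
  refine Finset.sum_congr rfl fun i hi => ?_
  rw [Finset.mem_range] at hi
  have e1 : p - 1 - (p - 1 - i) = i := by omega
  simp only [e1]

lemma vR_refl : vR k p = ∑ j ∈ Finset.range p, X2 k p ^ (p - 1 - j) * X3 k p ^ j := by
  rw [vR_eq, ← Finset.sum_range_reflect (fun j => X2 k p ^ (p - 1 - j) * X3 k p ^ j) p]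
  refine Finset.sum_congr rfl fun i hi => ?_
  rw [Finset.mem_range] at hi
  have e1 : p - 1 - (p - 1 - i) = i := by omega
  simp only [e1]

lemma idA (hp : 2 < p) : uL k p * wElt k p = vM k p - vR k p := by
  rw [uL_eq, w_eq' k p hp, vM_refl, vR_refl, Finset.mul_sum]
  have hsplit : ∀ Y : TT k p, ∑ j ∈ Finset.range p, Y ^ (p - 1 - j) * X3 k p ^ j
      = (∑ j ∈ Finset.range (p-1), Y ^ (p - 1 - j) * X3 k p ^ j) + X3 k p ^ (p-1) := by
    intro Y
    have h1 : p - 1 + 1 = p := by omega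
    have h2 := Finset.sum_range_succ (fun j => Y ^ (p - 1 - j) * X3 k p ^ j) (p - 1)
    rw [h1, Nat.sub_self, pow_zero, one_mul] at h2
    exact h2
  rw [hsplit (X1 k p), hsplit (X2 k p)]
  have key : ∀ c ∈ Finset.range (p - 1),
      (X1 k p - X2 k p) * ∑ a ∈ Finset.range (p - 1 - c),
          X1 k p ^ a * X2 k p ^ (p - 2 - a - c) * X3 k p ^ c
        = X1 k p ^ (p - 1 - c) * X3 k p ^ c - X2 k p ^ (p - 1 - c) * X3 k p ^ c := by
    intro c hc
    rw [Finset.mem_range] at hc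
    rw [Finset.mul_sum]
    have step : ∀ a ∈ Finset.range (p - 1 - c),
        (X1 k p - X2 k p) * (X1 k p ^ a * X2 k p ^ (p - 2 - a - c) * X3 k p ^ c)
          = X1 k p ^ (a+1) * X2 k p ^ (p - 1 - c - (a+1)) * X3 k p ^ c
            - X1 k p ^ a * X2 k p ^ (p - 1 - c - a) * X3 k p ^ c := by
      intro a ha
      rw [Finset.mem_range] at ha
      have e1 : p - 1 - c - (a+1) = p - 2 - a - c := by omega
      have e2 : p - 1 - c - a = (p - 2 - a - c) + 1 := by omega
      rw [e1, e2]; ring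
    rw [Finset.sum_congr rfl step,
      Finset.sum_range_sub (fun a => X1 k p ^ a * X2 k p ^ (p - 1 - c - a) * X3 k p ^ c)]
    have e3 : p - 1 - c - (p - 1 - c) = 0 := by omega
    rw [e3, Nat.sub_zero]
    ring
  rw [Finset.sum_congr rfl key, Finset.sum_sub_distrib]
  abel

lemma idD (hp : 2 < p) : uM k p * wElt k p = vL k p - vR k p := by
  rw [← idC, add_mul, idA k p hp, idB k p hp]
  abel

def phiE : Ae k p →ₐ[k] TT k p :=
  Algebra.TensorProduct.map Algebra.TensorProduct.includeLeft (AlgHom.id k (Aq k p))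

lemma phiE_tmul (a b : Aq k p) : phiE k p (a ⊗ₜ b) = (a ⊗ₜ (1 : Aq k p)) ⊗ₜ b := by
  simp [phiE]

lemma phiE_pow (a b : ℕ) :
    phiE k p ((xq k p ^ a) ⊗ₜ (xq k p ^ b)) = X1 k p ^ a * X3 k p ^ b := by
  rw [phiE_tmul]
  have := trip k p a 0 b
  simpa only [pow_zero, mul_one] using this

lemma phiE_u : phiE k p (uE k p) = uM k p := by
  have h1 := phiE_pow k p 1 0
  have h2 := phiE_pow k p 0 1
  simp only [pow_one, pow_zero] at h1 h2
  rw [uE, uM, map_sub, h1, h2]; ring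

lemma phiE_v : phiE k p (vE k p) = vM k p := by
  rw [vE, vM, map_sum]
  exact Finset.sum_congr rfl fun i _ => phiE_pow k p i (p - 1 - i)

lemma key (hp : 2 < p) (n i : ℕ) (hi : i ≤ n) :
    eL k p (i+1) * dElt k p (n+1) (i+1)
      + (-1 : TT k p)^i * (eR k p (n+1-i) * dElt k p (n+1) i)
      = phiE k p (if (n+1) % 2 = 1 then uE k p else vE k p) * dElt k p n i := by
  rcases Nat.mod_two_eq_zero_or_one n with hn | hn <;>
    rcases Nat.mod_two_eq_zero_or_one i with hi2 | hi2
  · -- n even, i even : identity C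
    have c1 : (i+1) % 2 = 1 := by omega
    have c2 : (n+1-i) % 2 = 1 := by omega
    have c3 : (n+1) % 2 = 1 := by omega
    have c4 : (-1 : TT k p)^i = 1 := Even.neg_one_pow (Nat.even_iff.mpr hi2)
    simp only [eL, eR, dElt, c1, c2, c3, hn, hi2, c4, reduceCtorEq, Nat.one_ne_zero,
      false_and, and_false, if_false, if_true, reduceIte, mul_one, one_mul, phiE_u]
    rw [← idC]
  · -- n even, i odd : identity D
    have c1 : (i+1) % 2 = 0 := by omega
    have c2 : (n+1-i) % 2 = 0 := by omega
    have c3 : (n+1) % 2 = 1 := by omega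
    have c4 : (-1 : TT k p)^i = -1 := Odd.neg_one_pow (Nat.odd_iff.mpr hi2)
    simp only [eL, eR, dElt, c1, c2, c3, hn, hi2, c4, reduceCtorEq, Nat.one_ne_zero,
      false_and, and_false, and_true, and_self, if_false, if_true, reduceIte, mul_one,
      one_mul, phiE_u]
    linear_combination -(idD k p hp)
  · -- n odd, i even : identity A
    have c1 : (i+1) % 2 = 1 := by omega
    have c2 : (n+1-i) % 2 = 0 := by omega
    have c3 : (n+1) % 2 = 0 := by omega
    have c4 : (-1 : TT k p)^i = 1 := Even.neg_one_pow (Nat.even_iff.mpr hi2)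
    simp only [eL, eR, dElt, c1, c2, c3, hn, hi2, c4, reduceCtorEq, Nat.one_ne_zero,
      false_and, and_false, and_true, and_self, if_false, if_true, reduceIte, mul_one,
      one_mul, phiE_v]
    linear_combination idA k p hp
  · -- n odd, i odd : identity B
    have c1 : (i+1) % 2 = 0 := by omega
    have c2 : (n+1-i) % 2 = 1 := by omega
    have c3 : (n+1) % 2 = 0 := by omega
    have c4 : (-1 : TT k p)^i = -1 := Odd.neg_one_pow (Nat.odd_iff.mpr hi2)
    simp only [eL, eR, dElt, c1, c2, c3, hn, hi2, c4, reduceCtorEq, Nat.one_ne_zero,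
      false_and, and_false, and_true, and_self, if_false, if_true, reduceIte, mul_one,
      one_mul, phiE_v]
    linear_combination -(idB k p hp)

lemma xq_pow_p : xq k p ^ p = 0 := by
  rw [xq, ← AdjoinRoot.mk_X, ← map_pow, AdjoinRoot.mk_self]

lemma xq_pow_ge {a : ℕ} (h : p ≤ a) : xq k p ^ a = 0 := by
  rw [← Nat.sub_add_cancel h, pow_add, xq_pow_p, mul_zero]

lemma span_pow_xq : Submodule.span k (Set.range fun i : ℕ => xq k p ^ i) = ⊤ := by
  have hm : (X ^ p : k[X]).Monic := monic_X_pow p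
  rw [eq_top_iff, ← (AdjoinRoot.powerBasis' hm).basis.span_eq, Submodule.span_le]
  rintro _ ⟨i, rfl⟩
  exact Submodule.subset_span ⟨i, by
    rw [(AdjoinRoot.powerBasis' hm).basis_eq_pow, AdjoinRoot.powerBasis'_gen]; rfl⟩

lemma ext_Ae {M : Type} [AddCommMonoid M] [Module k M] (f g : Ae k p →ₗ[k] M)
    (h : ∀ a b : ℕ, f ((xq k p ^ a) ⊗ₜ (xq k p ^ b)) = g ((xq k p ^ a) ⊗ₜ (xq k p ^ b))) :
    f = g := by
  apply TensorProduct.ext'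
  intro m n
  have hmem : ∀ z : Aq k p, z ∈ Submodule.span k (Set.range fun i : ℕ => xq k p ^ i) := by
    intro z; rw [span_pow_xq]; exact Submodule.mem_top
  have hbase : ∀ (b : ℕ), f (m ⊗ₜ (xq k p ^ b)) = g (m ⊗ₜ (xq k p ^ b)) := by
    intro b
    induction hmem m using Submodule.span_induction with
    | mem x hx => obtain ⟨a, rfl⟩ := hx; exact h a b
    | zero => rw [TensorProduct.zero_tmul, map_zero, map_zero]
    | add x y _ _ hx hy => rw [TensorProduct.add_tmul, map_add, map_add, hx, hy]
    | smul c x _ hx => rw [← TensorProduct.smul_tmul', map_smul, map_smul, hx]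
  induction hmem n using Submodule.span_induction with
  | mem x hx => obtain ⟨b, rfl⟩ := hx; exact hbase b
  | zero => rw [TensorProduct.tmul_zero, map_zero, map_zero]
  | add x y _ _ hx hy => rw [TensorProduct.tmul_add, map_add, map_add, hx, hy]
  | smul c x _ hx => rw [TensorProduct.tmul_smul, map_smul, map_smul, hx]

/-- The `A^e`-linear map `Δ : 𝔸 → 𝔸 ⊗_A 𝔸` defined by
`Δ₀(ξ₀) = ξ₀⊗ξ₀`, `Δ₁(ξ₁) = ξ₁⊗ξ₀ + ξ₀⊗ξ₁`,
`Δ_{2n}(ξ_{2n}) = Σ_{i=0}^n ξ_{2i}⊗ξ_{2n-2i} + Σ_{i=0}^{n-1} Σ_{a+b+c=p-2} x^a ξ_{2i+1} ⊗ x^b ξ_{2n-2i-1} x^c`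
(`n ≥ 1`), and `Δ_{2n+1}(ξ_{2n+1}) = Σ_{i=0}^{2n+1} ξᵢ ⊗ ξ_{2n+1-i}` (`n ≥ 1`)
is a chain map lifting the canonical isomorphism `A ≅ A ⊗_A A`:
`d_{𝔸⊗_A𝔸} ∘ Δₙ = Δ_{n-1} ∘ dₙ` for all `n ≥ 1`, and `(π ⊗_A π) ∘ Δ₀ = π`.
(The map `Δ` is recorded by its values `Δₙ(x^a ξₙ x^b) = (x^a ⊗ 1 ⊗ x^b) · Δₙ(ξₙ)`,
which encodes both the defining formulas above — via `dElt` — and `A^e`-linearity.) -/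
theorem diagonal_is_chain_map (hp : 2 < p)
    (D : (n : ℕ) → Ae k p →ₗ[k] (Fin (n + 1) → TT k p))
    (HD : ∀ n, ∀ a < p, ∀ b < p,
      D n ((xq k p ^ a) ⊗ₜ (xq k p ^ b)) =
        fun i : Fin (n + 1) =>
          ((((xq k p ^ a) ⊗ₜ (1 : Aq k p)) ⊗ₜ (xq k p ^ b)) : TT k p) * dElt k p n (i : ℕ)) :
    (∀ n : ℕ, dTot k p (n + 1) ∘ₗ D (n + 1) = D n ∘ₗ dAn k p (n + 1)) ∧
    mulAll k p ∘ₗ D 0 = piA k p := by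
  have HD2 : ∀ n (z : Ae k p), D n z = fun i : Fin (n+1) => phiE k p z * dElt k p n (i : ℕ) := by
    intro n
    have heq : D n = (LinearMap.pi fun i : Fin (n+1) =>
        (LinearMap.mulRight k (dElt k p n (i : ℕ))) ∘ₗ (phiE k p).toLinearMap) := by
      apply ext_Ae
      intro a b
      by_cases ha : a < p
      · by_cases hb : b < p
        · rw [HD n a ha b hb]
          funext i
          simp only [LinearMap.pi_apply, LinearMap.coe_comp, Function.comp_apply,
            AlgHom.toLinearMap_apply, LinearMap.mulRight_apply, phiE_tmul]
        · have h0 : ((xq k p ^ a) ⊗ₜ (xq k p ^ b) : Ae k p) = 0 := by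
            rw [xq_pow_ge k p (le_of_not_gt hb), TensorProduct.tmul_zero]
          rw [h0, map_zero, map_zero]
      · have h0 : ((xq k p ^ a) ⊗ₜ (xq k p ^ b) : Ae k p) = 0 := by
          rw [xq_pow_ge k p (le_of_not_gt ha), TensorProduct.zero_tmul]
        rw [h0, map_zero, map_zero]
    intro z
    rw [heq]
    rfl
  constructor
  · intro n
    apply LinearMap.ext
    intro z
    funext i
    have hkey := key k p hp n i (Nat.lt_succ_iff.mp i.isLt)
    simp only [LinearMap.comp_apply, dTot, LinearMap.pi_apply, LinearMap.add_apply,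
      LinearMap.smul_apply, LinearMap.coe_comp, Function.comp_apply,
      LinearMap.mulLeft_apply, LinearMap.proj_apply, HD2, dAn, Fin.val_succ,
      Fin.coe_castSucc, map_mul, Pi.smul_apply, Algebra.smul_def, map_pow, map_neg,
      map_one]
    linear_combination (phiE k p z) * hkey
  · apply ext_Ae
    intro a b
    rw [LinearMap.comp_apply, HD2 0]
    have hd : dElt k p 0 ((0 : Fin 1) : ℕ) = 1 := by simp [dElt]
    simp only [mulAll, LinearMap.comp_apply, LinearMap.proj_apply, hd, mul_one,
      phiE_tmul, Lmap, LinearMap.rTensor_tmul, LinearMap.mul'_apply, piA, mul_one]
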